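/- arXiv:2310.10576 — 4 statements merged into one kernel-verified Lean document; each statement's English description precedes it below -/
import Mathlib

section
/- In an implicative algebra, the encoding of the combinator s = λx.λy.λz.xz(yz) equals S = ⋀_{a,b,c∈A}((a → (b → c)) → ((a → b) → (a → c))). -/
universe u v

/-- An implicative algebra: a complete lattice with an implication antitone in the
first argument, monotone in the second, distributing over arbitrary meets in the
second argument, together with a separator `Sep` which is upward closed, closed
under modus ponens, and contains the combinators K and S. -/
structure ImplicativeAlgebra (A : Type u) [CompleteLattice A] where
  imp : A → A → A
  imp_anti : ∀ ⦃a a' b : A⦄, a ≤ a' → imp a' b ≤ imp a b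
  imp_mono : ∀ ⦃a b b' : A⦄, b ≤ b' → imp a b ≤ imp a b'
  imp_sInf : ∀ (a : A) (S : Set A), imp a (sInf S) = ⨅ b ∈ S, imp a b
  Sep : Set A
  sep_upward : ∀ ⦃a b : A⦄, a ∈ Sep → a ≤ b → b ∈ Sep
  sep_mp : ∀ ⦃a b : A⦄, imp a b ∈ Sep → a ∈ Sep → b ∈ Sep
  sep_K : (⨅ a : A, ⨅ b : A, imp a (imp b a)) ∈ Sep
  sep_S : (⨅ a : A, ⨅ b : A, ⨅ c : A,
      imp (imp a (imp b c)) (imp (imp a b) (imp a c))) ∈ Sep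

namespace ImplicativeAlgebra

variable {A : Type u} [CompleteLattice A] (𝔸 : ImplicativeAlgebra A)

/-- Application: `a · b := ⋀ {x | a ≤ b → x}`. -/
def app (a b : A) : A := sInf {x : A | a ≤ 𝔸.imp b x}

/-- Implicative conjunction `a × b`. -/
def itimes (a b : A) : A := ⨅ x : A, 𝔸.imp (𝔸.imp a (𝔸.imp b x)) x

/-- Implicative disjunction `a + b`. -/
def iplus (a b : A) : A := ⨅ x : A, 𝔸.imp (𝔸.imp a x) (𝔸.imp (𝔸.imp b x) x)

/-- Second-order encoding of the existential quantifier. -/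
def iexists {ι : Sort v} (f : ι → A) : A := ⨅ x : A, 𝔸.imp (⨅ i, 𝔸.imp (f i) x) x

/-- Encoding of k = λx.λy.x. -/
def kComb : A := ⨅ a : A, 𝔸.imp a (⨅ b : A, 𝔸.imp b a)

/-- Encoding of λx.λy.y. -/
def kbarComb : A := ⨅ a : A, 𝔸.imp a (⨅ b : A, 𝔸.imp b b)

/-- Encoding of the pairing combinator p = λx.λy.λz.zxy. -/
def pComb : A := ⨅ a : A, 𝔸.imp a (⨅ b : A, 𝔸.imp b (⨅ c : A, 𝔸.imp c (𝔸.app (𝔸.app c a) b)))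

/-- Encoding of the first projection p₁ = λu.u k. -/
def p1Comb : A := ⨅ u : A, 𝔸.imp u (𝔸.app u 𝔸.kComb)

/-- Encoding of the second projection p₂ = λv.v k̄. -/
def p2Comb : A := ⨅ u : A, 𝔸.imp u (𝔸.app u 𝔸.kbarComb)

/-- Encoding of the existential-introduction combinator e = λx.λz.zx. -/
def eComb : A := ⨅ a : A, 𝔸.imp a (⨅ c : A, 𝔸.imp c (𝔸.app c a))

end ImplicativeAlgebra

/-- λ-terms with constant parameters in `A` (de Bruijn indices). -/
inductive Term (A : Type u) : Type u
  | var : ℕ → Term A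
  | param : A → Term A
  | app : Term A → Term A → Term A
  | lam : Term A → Term A

/-- Extend an environment with a new value for the variable `0`. -/
def consEnv {A : Type u} (a : A) (ρ : ℕ → A) : ℕ → A
  | 0 => a
  | n + 1 => ρ n

/-- The encoding of λ-terms with parameters in `A` as elements of `A`
(relative to an environment interpreting the free variables). -/
def Term.eval {A : Type u} [CompleteLattice A] (𝔸 : ImplicativeAlgebra A) :
    Term A → (ℕ → A) → A
  | .var n, ρ => ρ n
  | .param a, _ => a
  | .app t s, ρ => 𝔸.app (Term.eval 𝔸 t ρ) (Term.eval 𝔸 s ρ)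
  | .lam t, ρ => ⨅ a : A, 𝔸.imp a (Term.eval 𝔸 t (consEnv a ρ))

section Aux

variable {A : Type u} [CompleteLattice A] (𝔸 : ImplicativeAlgebra A)

lemma le_imp_app (a b : A) : a ≤ 𝔸.imp b (𝔸.app a b) := by
  rw [ImplicativeAlgebra.app, 𝔸.imp_sInf]
  exact le_iInf fun x => le_iInf fun hx => hx

lemma app_le {a b c : A} (h : a ≤ 𝔸.imp b c) : 𝔸.app a b ≤ c := sInf_le h

lemma app_le_iff {a b c : A} : 𝔸.app a b ≤ c ↔ a ≤ 𝔸.imp b c :=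
  ⟨fun h => (le_imp_app 𝔸 a b).trans (𝔸.imp_mono h), app_le 𝔸⟩

lemma app_mono {a a' b b' : A} (ha : a ≤ a') (hb : b ≤ b') :
    𝔸.app a b ≤ 𝔸.app a' b' := by
  refine app_le 𝔸 (ha.trans ((le_imp_app 𝔸 a' b').trans (𝔸.imp_anti hb)))

lemma imp_iInf {ι : Sort v} (a : A) (f : ι → A) :
    𝔸.imp a (⨅ i, f i) = ⨅ i, 𝔸.imp a (f i) := by
  rw [iInf, 𝔸.imp_sInf, iInf_range]

end Aux

/-- In an implicative algebra, the encoding of the combinator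
s = λx.λy.λz.xz(yz) equals S = ⋀_{a,b,c∈A}((a → (b → c)) → ((a → b) → (a → c))). -/
theorem sComb_eq_S {A : Type u} [CompleteLattice A] (𝔸 : ImplicativeAlgebra A)
    (ρ : ℕ → A) :
    Term.eval 𝔸
        (.lam (.lam (.lam (.app (.app (.var 2) (.var 0)) (.app (.var 1) (.var 0)))))) ρ =
      ⨅ a : A, ⨅ b : A, ⨅ c : A,
        𝔸.imp (𝔸.imp a (𝔸.imp b c)) (𝔸.imp (𝔸.imp a b) (𝔸.imp a c)) := by
  simp only [Term.eval, consEnv]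
  apply le_antisymm
  · refine le_iInf fun a => le_iInf fun b => le_iInf fun c => ?_
    refine (iInf_le _ (𝔸.imp a (𝔸.imp b c))).trans (𝔸.imp_mono ?_)
    refine (iInf_le _ (𝔸.imp a b)).trans (𝔸.imp_mono ?_)
    refine (iInf_le _ a).trans (𝔸.imp_mono ?_)
    exact (app_mono 𝔸 (app_le 𝔸 le_rfl) (app_le 𝔸 le_rfl)).trans (app_le 𝔸 le_rfl)
  · simp only [imp_iInf]
    refine le_iInf fun x => le_iInf fun y => le_iInf fun z => ?_
    set T := 𝔸.app (𝔸.app x z) (𝔸.app y z) with hT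
    have h1 : x ≤ 𝔸.imp z (𝔸.imp (𝔸.app y z) T) :=
      (le_imp_app 𝔸 x z).trans (𝔸.imp_mono (le_imp_app 𝔸 _ _))
    have h2 : y ≤ 𝔸.imp z (𝔸.app y z) := le_imp_app 𝔸 y z
    refine le_trans (iInf_le _ z) ?_
    refine le_trans (iInf_le _ (𝔸.app y z)) ?_
    refine le_trans (iInf_le _ T) ?_
    exact (𝔸.imp_anti h1).trans (𝔸.imp_mono (𝔸.imp_anti h2))
end

section
/- In an implicative algebra, if t is a pure closed λ-term (no parameters), then its encoding t^A belongs to the separator Σ. -/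
universe u v

/-- A λ-term is pure (contains no parameters) with all free variables among the
first `n` de Bruijn indices. -/
inductive Term.PureUnder {A : Type u} : ℕ → Term A → Prop
  | var {n i : ℕ} : i < n → Term.PureUnder n (.var i)
  | app {n : ℕ} {t s : Term A} :
      Term.PureUnder n t → Term.PureUnder n s → Term.PureUnder n (.app t s)
  | lam {n : ℕ} {t : Term A} : Term.PureUnder (n + 1) t → Term.PureUnder n (.lam t)

namespace PureClosedAux

variable {A : Type u} [CompleteLattice A] (𝔸 : ImplicativeAlgebra A)

/-- Semantic K combinator. -/
def kS : A := ⨅ a : A, ⨅ b : A, 𝔸.imp a (𝔸.imp b a)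

/-- Semantic S combinator. -/
def sS : A := ⨅ a : A, ⨅ b : A, ⨅ c : A,
    𝔸.imp (𝔸.imp a (𝔸.imp b c)) (𝔸.imp (𝔸.imp a b) (𝔸.imp a c))

theorem kS_mem : kS 𝔸 ∈ 𝔸.Sep := 𝔸.sep_K
theorem sS_mem : sS 𝔸 ∈ 𝔸.Sep := 𝔸.sep_S

theorem app_le {a b x : A} (h : a ≤ 𝔸.imp b x) : 𝔸.app a b ≤ x :=
  sInf_le h

theorem le_imp_app (a b : A) : a ≤ 𝔸.imp b (𝔸.app a b) := by
  rw [ImplicativeAlgebra.app, 𝔸.imp_sInf]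
  exact le_iInf fun x => le_iInf fun hx => hx

theorem app_mem {a b : A} (ha : a ∈ 𝔸.Sep) (hb : b ∈ 𝔸.Sep) : 𝔸.app a b ∈ 𝔸.Sep :=
  𝔸.sep_mp (𝔸.sep_upward ha (le_imp_app 𝔸 a b)) hb

theorem app_mono {a a' b b' : A} (ha : a ≤ a') (hb : b ≤ b') :
    𝔸.app a b ≤ 𝔸.app a' b' := by
  refine app_le 𝔸 (le_trans ha (le_trans (le_imp_app 𝔸 a' b') ?_))
  exact 𝔸.imp_anti hb

theorem k_red (a b : A) : 𝔸.app (𝔸.app (kS 𝔸) a) b ≤ a := by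
  refine app_le 𝔸 (app_le 𝔸 ?_)
  exact le_trans (iInf_le _ a) (iInf_le _ b)

theorem s_red (f g x : A) :
    𝔸.app (𝔸.app (𝔸.app (sS 𝔸) f) g) x ≤ 𝔸.app (𝔸.app f x) (𝔸.app g x) := by
  refine app_le 𝔸 (app_le 𝔸 (app_le 𝔸 ?_))
  refine le_trans (iInf_le _ x) ?_
  refine le_trans (iInf_le _ (𝔸.app g x)) ?_
  refine le_trans (iInf_le _ (𝔸.app (𝔸.app f x) (𝔸.app g x))) ?_
  refine le_trans (𝔸.imp_anti (le_trans (le_imp_app 𝔸 f x)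
    (𝔸.imp_mono (le_imp_app 𝔸 (𝔸.app f x) (𝔸.app g x))))) ?_
  exact 𝔸.imp_mono (𝔸.imp_anti (le_imp_app 𝔸 g x))

/-- SK expressions with de Bruijn variables. -/
inductive E : Type
  | var : ℕ → E
  | K : E
  | S : E
  | app : E → E → E

/-- Evaluation of SK expressions. -/
def evalE : E → (ℕ → A) → A
  | .var n, ρ => ρ n
  | .K, _ => kS 𝔸
  | .S, _ => sS 𝔸
  | .app e f, ρ => 𝔸.app (evalE e ρ) (evalE f ρ)

/-- Bracket abstraction of the variable 0. -/
def absE : E → E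
  | .var 0 => .app (.app .S .K) .K
  | .var (i + 1) => .app .K (.var i)
  | .K => .app .K .K
  | .S => .app .K .S
  | .app e f => .app (.app .S (absE e)) (absE f)

/-- All variables below `n`. -/
def VarsUnder : ℕ → E → Prop
  | n, .var i => i < n
  | _, .K => True
  | _, .S => True
  | n, .app e f => VarsUnder n e ∧ VarsUnder n f

theorem absE_vars {n : ℕ} : ∀ {e : E}, VarsUnder (n + 1) e → VarsUnder n (absE e)
  | .var 0, _ => ⟨⟨trivial, trivial⟩, trivial⟩
  | .var (i + 1), h => ⟨trivial, Nat.lt_of_succ_lt_succ h⟩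
  | .K, _ => ⟨trivial, trivial⟩
  | .S, _ => ⟨trivial, trivial⟩
  | .app e f, h => ⟨⟨trivial, absE_vars h.1⟩, absE_vars h.2⟩

theorem closed_mem : ∀ {e : E}, VarsUnder 0 e → ∀ ρ : ℕ → A, evalE 𝔸 e ρ ∈ 𝔸.Sep
  | .var i, h, _ => absurd h (Nat.not_lt_zero i)
  | .K, _, _ => kS_mem 𝔸
  | .S, _, _ => sS_mem 𝔸
  | .app e f, h, ρ => app_mem 𝔸 (closed_mem h.1 ρ) (closed_mem h.2 ρ)

theorem absE_red : ∀ (e : E) (ρ : ℕ → A) (a : A),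
    𝔸.app (evalE 𝔸 (absE e) ρ) a ≤ evalE 𝔸 e (consEnv a ρ)
  | .var 0, ρ, a => by
      refine le_trans (app_mono 𝔸 (le_refl _) (le_refl a)) ?_
      have := s_red 𝔸 (kS 𝔸) (kS 𝔸) a
      refine le_trans this ?_
      exact k_red 𝔸 a (𝔸.app (kS 𝔸) a)
  | .var (i + 1), ρ, a => k_red 𝔸 (ρ i) a
  | .K, ρ, a => k_red 𝔸 (kS 𝔸) a
  | .S, ρ, a => k_red 𝔸 (sS 𝔸) a
  | .app e f, ρ, a => by
      refine le_trans (s_red 𝔸 (evalE 𝔸 (absE e) ρ) (evalE 𝔸 (absE f) ρ) a) ?_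
      exact app_mono 𝔸 (absE_red e ρ a) (absE_red f ρ a)

/-- Translation of λ-terms to SK expressions. -/
def trans : Term A → E
  | .var i => .var i
  | .param _ => .K
  | .app t s => .app (trans t) (trans s)
  | .lam t => absE (trans t)

theorem trans_vars {n : ℕ} {t : Term A} (h : Term.PureUnder n t) :
    VarsUnder n (trans t) := by
  induction h with
  | var h => exact h
  | app _ _ ih1 ih2 => exact ⟨ih1, ih2⟩
  | lam _ ih => exact absE_vars ih

theorem trans_le {n : ℕ} {t : Term A} (h : Term.PureUnder n t) :
    ∀ ρ : ℕ → A, evalE 𝔸 (trans t) ρ ≤ Term.eval 𝔸 t ρ := by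
  induction h with
  | var _ => exact fun ρ => le_refl _
  | app _ _ ih1 ih2 =>
      exact fun ρ => app_mono 𝔸 (ih1 ρ) (ih2 ρ)
  | @lam n t _ ih =>
      intro ρ
      show evalE 𝔸 (absE (trans t)) ρ ≤ ⨅ a : A, 𝔸.imp a (Term.eval 𝔸 t (consEnv a ρ))
      refine le_iInf fun a => ?_
      refine le_trans (le_imp_app 𝔸 _ a) (𝔸.imp_mono ?_)
      exact le_trans (absE_red 𝔸 (trans t) ρ a) (ih (consEnv a ρ))

end PureClosedAux

/-- if t is a pure closed λ-term (no parameters), then its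
encoding t^A belongs to the separator Σ. -/
theorem pure_closed_mem_sep {A : Type u} [CompleteLattice A]
    (𝔸 : ImplicativeAlgebra A) (t : Term A) (ht : Term.PureUnder 0 t) (ρ : ℕ → A) :
    Term.eval 𝔸 t ρ ∈ 𝔸.Sep :=
  𝔸.sep_upward (PureClosedAux.closed_mem 𝔸 (PureClosedAux.trans_vars ht) ρ)
    (PureClosedAux.trans_le 𝔸 ht ρ)
end

section
/- In an implicative algebra, the implicative conjunction a × b satisfies the introduction and elimination rules up to the separator: there exist p, p1, p2 ∈ Σ such that p ≤ ⋀_{a,b}(a → (b → a×b)), p1 ≤ ⋀_{a,b}(a×b → a), and p2 ≤ ⋀_{a,b}(a×b → b). -/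
universe u v

namespace ImplicativeAlgebra

variable {A : Type u} [CompleteLattice A] (𝔸 : ImplicativeAlgebra A)

lemma le_imp_app (s a : A) : s ≤ 𝔸.imp a (𝔸.app s a) := by
  rw [app, 𝔸.imp_sInf]
  exact le_iInf fun b => le_iInf fun hb => hb

lemma app_le {s a b : A} (h : s ≤ 𝔸.imp a b) : 𝔸.app s a ≤ b := sInf_le h

lemma le_imp_of_app_le {s a b : A} (h : 𝔸.app s a ≤ b) : s ≤ 𝔸.imp a b :=
  (𝔸.le_imp_app s a).trans (𝔸.imp_mono h)

lemma app_mono {s s' a a' : A} (hs : s ≤ s') (ha : a ≤ a') :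
    𝔸.app s a ≤ 𝔸.app s' a' :=
  𝔸.app_le (hs.trans ((𝔸.le_imp_app s' a').trans (𝔸.imp_anti ha)))

lemma app_sep {a b : A} (ha : a ∈ 𝔸.Sep) (hb : b ∈ 𝔸.Sep) : 𝔸.app a b ∈ 𝔸.Sep :=
  𝔸.sep_mp (𝔸.sep_upward ha (𝔸.le_imp_app a b)) hb

/-- The K element. -/
def KA : A := ⨅ a : A, ⨅ b : A, 𝔸.imp a (𝔸.imp b a)

/-- The S element. -/
def SA : A := ⨅ a : A, ⨅ b : A, ⨅ c : A,
  𝔸.imp (𝔸.imp a (𝔸.imp b c)) (𝔸.imp (𝔸.imp a b) (𝔸.imp a c))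

lemma KA_sep : 𝔸.KA ∈ 𝔸.Sep := 𝔸.sep_K
lemma SA_sep : 𝔸.SA ∈ 𝔸.Sep := 𝔸.sep_S

lemma KA_le (a b : A) : 𝔸.KA ≤ 𝔸.imp a (𝔸.imp b a) :=
  (iInf_le _ a).trans (iInf_le _ b)

lemma K_red (a b : A) : 𝔸.app (𝔸.app 𝔸.KA a) b ≤ a :=
  𝔸.app_le (𝔸.app_le (𝔸.KA_le a b))

lemma S_red (f g a : A) :
    𝔸.app (𝔸.app (𝔸.app 𝔸.SA f) g) a ≤ 𝔸.app (𝔸.app f a) (𝔸.app g a) := by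
  set b := 𝔸.app g a with hb
  set c := 𝔸.app (𝔸.app f a) b with hc
  have hf : f ≤ 𝔸.imp a (𝔸.imp b c) :=
    (𝔸.le_imp_app f a).trans (𝔸.imp_mono (𝔸.le_imp_app (𝔸.app f a) b))
  have hS : 𝔸.SA ≤ 𝔸.imp (𝔸.imp a (𝔸.imp b c)) (𝔸.imp (𝔸.imp a b) (𝔸.imp a c)) :=
    (iInf_le _ a).trans ((iInf_le _ b).trans (iInf_le _ c))
  have h1 : 𝔸.app 𝔸.SA f ≤ 𝔸.imp (𝔸.imp a b) (𝔸.imp a c) :=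
    𝔸.app_le (hS.trans (𝔸.imp_anti hf))
  have h2 : 𝔸.app (𝔸.app 𝔸.SA f) g ≤ 𝔸.imp a c :=
    𝔸.app_le (h1.trans (𝔸.imp_anti (𝔸.le_imp_app g a)))
  exact 𝔸.app_le h2

/-- SK term language with variables. -/
inductive CTerm where
  | K : CTerm
  | S : CTerm
  | var : ℕ → CTerm
  | app : CTerm → CTerm → CTerm

/-- Evaluation of an SK term in the algebra. -/
def ceval (env : ℕ → A) : CTerm → A
  | .K => 𝔸.KA
  | .S => 𝔸.SA
  | .var n => env n
  | .app t u => 𝔸.app (ceval env t) (ceval env u)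

/-- Bracket abstraction. -/
def cabs (n : ℕ) : CTerm → CTerm
  | .K => .app .K .K
  | .S => .app .K .S
  | .var m => if m = n then .app (.app .S .K) .K else .app .K (.var m)
  | .app t u => .app (.app .S (cabs n t)) (cabs n u)

lemma ceval_sep (env : ℕ → A) (henv : ∀ n, env n ∈ 𝔸.Sep) :
    ∀ t : CTerm, 𝔸.ceval env t ∈ 𝔸.Sep
  | .K => 𝔸.KA_sep
  | .S => 𝔸.SA_sep
  | .var n => henv n
  | .app t u => 𝔸.app_sep (ceval_sep env henv t) (ceval_sep env henv u)

lemma cabs_red (env : ℕ → A) (n : ℕ) (a : A) :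
    ∀ t : CTerm, 𝔸.app (𝔸.ceval env (cabs n t)) a ≤
      𝔸.ceval (fun m => if m = n then a else env m) t
  | .K => by
      simp only [cabs, ceval]
      exact 𝔸.K_red _ _
  | .S => by
      simp only [cabs, ceval]
      exact 𝔸.K_red _ _
  | .var m => by
      by_cases h : m = n
      · simp only [cabs, if_pos h, ceval, h]
        exact (𝔸.S_red _ _ _).trans (𝔸.K_red _ _)
      · simp only [cabs, if_neg h, ceval]
        exact 𝔸.K_red _ _
  | .app t u => by
      simp only [cabs, ceval]
      exact (𝔸.S_red _ _ _).trans
        (𝔸.app_mono (cabs_red env n a t) (cabs_red env n a u))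

end ImplicativeAlgebra

open ImplicativeAlgebra ImplicativeAlgebra.CTerm

/-- implicative conjunction satisfies introduction and elimination
up to the separator. -/
theorem itimes_intro_elim {A : Type u} [CompleteLattice A]
    (𝔸 : ImplicativeAlgebra A) :
    ∃ p ∈ 𝔸.Sep, ∃ p1 ∈ 𝔸.Sep, ∃ p2 ∈ 𝔸.Sep,
      p ≤ (⨅ a : A, ⨅ b : A, 𝔸.imp a (𝔸.imp b (𝔸.itimes a b))) ∧
      p1 ≤ (⨅ a : A, ⨅ b : A, 𝔸.imp (𝔸.itimes a b) a) ∧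
      p2 ≤ (⨅ a : A, ⨅ b : A, 𝔸.imp (𝔸.itimes a b) b) := by
  classical
  set env0 : ℕ → A := fun _ => 𝔸.KA with henv0
  have henv : ∀ n, env0 n ∈ 𝔸.Sep := fun _ => 𝔸.KA_sep
  refine ⟨𝔸.ceval env0 (ImplicativeAlgebra.cabs 0 (ImplicativeAlgebra.cabs 1
      (ImplicativeAlgebra.cabs 2 (.app (.app (.var 2) (.var 0)) (.var 1))))),
    𝔸.ceval_sep env0 henv _,
    𝔸.ceval env0 (ImplicativeAlgebra.cabs 0 (.app (.var 0) .K)),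
    𝔸.ceval_sep env0 henv _,
    𝔸.ceval env0 (ImplicativeAlgebra.cabs 0 (.app (.var 0)
      (ImplicativeAlgebra.cabs 0 (ImplicativeAlgebra.cabs 1 (.var 1))))),
    𝔸.ceval_sep env0 henv _, ?_, ?_, ?_⟩
  · -- pairing
    refine le_iInf fun a => le_iInf fun b => 𝔸.le_imp_of_app_le (𝔸.le_imp_of_app_le ?_)
    rw [ImplicativeAlgebra.itimes]
    refine le_iInf fun x => 𝔸.le_imp_of_app_le ?_
    have h1 := 𝔸.cabs_red env0 0 a (ImplicativeAlgebra.cabs 1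
      (ImplicativeAlgebra.cabs 2 (.app (.app (.var 2) (.var 0)) (.var 1))))
    have h2 := 𝔸.cabs_red (fun m => if m = 0 then a else env0 m) 1 b
      (ImplicativeAlgebra.cabs 2 (.app (.app (.var 2) (.var 0)) (.var 1)))
    have h3 := 𝔸.cabs_red
      (fun m => if m = 1 then b else if m = 0 then a else env0 m) 2
      (𝔸.imp a (𝔸.imp b x)) (.app (.app (.var 2) (.var 0)) (.var 1))
    have heq : 𝔸.ceval (fun m => if m = 2 then 𝔸.imp a (𝔸.imp b x)
          else if m = 1 then b else if m = 0 then a else env0 m)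
        (CTerm.app (.app (.var 2) (.var 0)) (.var 1))
        = 𝔸.app (𝔸.app (𝔸.imp a (𝔸.imp b x)) a) b := by
      simp [ImplicativeAlgebra.ceval]
    have hfin : 𝔸.app (𝔸.app (𝔸.imp a (𝔸.imp b x)) a) b ≤ x :=
      𝔸.app_le (𝔸.app_le (le_refl _))
    refine le_trans (𝔸.app_mono (𝔸.app_mono h1 le_rfl) le_rfl) ?_
    refine le_trans (𝔸.app_mono h2 le_rfl) ?_
    exact h3.trans (heq.le.trans hfin)
  · -- first projection
    refine le_iInf fun a => le_iInf fun b => 𝔸.le_imp_of_app_le ?_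
    have h1 := 𝔸.cabs_red env0 0 (𝔸.itimes a b) (CTerm.app (.var 0) .K)
    have heq : 𝔸.ceval (fun m => if m = 0 then 𝔸.itimes a b else env0 m)
        (CTerm.app (.var 0) .K) = 𝔸.app (𝔸.itimes a b) 𝔸.KA := by
      simp [ImplicativeAlgebra.ceval]
    have ht : 𝔸.itimes a b ≤ 𝔸.imp 𝔸.KA a := by
      rw [ImplicativeAlgebra.itimes]
      exact (iInf_le _ a).trans (𝔸.imp_anti (𝔸.KA_le a b))
    exact h1.trans (heq.le.trans (𝔸.app_le ht))
  · -- second projection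
    refine le_iInf fun a => le_iInf fun b => 𝔸.le_imp_of_app_le ?_
    have h1 := 𝔸.cabs_red env0 0 (𝔸.itimes a b)
      (CTerm.app (.var 0) (ImplicativeAlgebra.cabs 0 (ImplicativeAlgebra.cabs 1 (.var 1))))
    set kb := 𝔸.ceval (fun m => if m = 0 then 𝔸.itimes a b else env0 m)
      (ImplicativeAlgebra.cabs 0 (ImplicativeAlgebra.cabs 1 (.var 1))) with hkbdef
    have hkb : kb ≤ 𝔸.imp a (𝔸.imp b b) := by
      refine 𝔸.le_imp_of_app_le (𝔸.le_imp_of_app_le ?_)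
      have g1 := 𝔸.cabs_red (fun m => if m = 0 then 𝔸.itimes a b else env0 m) 0 a
        (ImplicativeAlgebra.cabs 1 (.var 1))
      have g2 := 𝔸.cabs_red
        (fun m => if m = 0 then a else if m = 0 then 𝔸.itimes a b else env0 m) 1 b
        (CTerm.var 1)
      refine le_trans (𝔸.app_mono g1 le_rfl) (g2.trans ?_)
      simp [ImplicativeAlgebra.ceval]
    have ht : 𝔸.itimes a b ≤ 𝔸.imp kb b := by
      rw [ImplicativeAlgebra.itimes]
      exact (iInf_le _ b).trans (𝔸.imp_anti hkb)
    have heq : 𝔸.ceval (fun m => if m = 0 then 𝔸.itimes a b else env0 m)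
        (CTerm.app (.var 0) (ImplicativeAlgebra.cabs 0 (ImplicativeAlgebra.cabs 1 (.var 1))))
        = 𝔸.app (𝔸.itimes a b) kb := by
      rw [hkbdef]
      simp [ImplicativeAlgebra.ceval]
    exact h1.trans (heq.le.trans (𝔸.app_le ht))
end

section
/- Every total combinatory algebra (R, ·) gives rise to an implicative algebra (𝒫(R), ⊆, ⇒, 𝒫(R)∖{∅}), where A ⇒ B := {r ∈ R | r·a ∈ B for all a ∈ A}. -/
universe u v

/-- A total combinatory algebra. -/
structure CombAlg (R : Type u) where
  op : R → R → R
  k : R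
  s : R
  k_spec : ∀ x y : R, op (op k x) y = x
  s_spec : ∀ x y z : R, op (op (op s x) y) z = op (op x z) (op y z)

/-- every total combinatory algebra (R, ·) gives rise to an
implicative algebra (𝒫(R), ⊆, ⇒, 𝒫(R) ∖ {∅}) where
A ⇒ B := {r | r·a ∈ B for all a ∈ A}. -/
theorem combAlg_implicativeAlgebra {R : Type u} (C : CombAlg R) :
    ∃ 𝔸 : ImplicativeAlgebra (Set R),
      𝔸.imp = (fun X Y => {r : R | ∀ a ∈ X, C.op r a ∈ Y}) ∧
      𝔸.Sep = {X : Set R | X.Nonempty} := by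
  refine ⟨{
    imp := fun X Y => {r : R | ∀ a ∈ X, C.op r a ∈ Y}
    imp_anti := by
      intro a a' b h r hr x hx
      exact hr x (h hx)
    imp_mono := by
      intro a b b' h r hr x hx
      exact h (hr x hx)
    imp_sInf := by
      intro a S
      ext r
      simp only [Set.mem_setOf_eq, Set.sInf_eq_sInter, Set.mem_sInter,
        Set.iInf_eq_iInter, Set.mem_iInter]
      tauto
    Sep := {X : Set R | X.Nonempty}
    sep_upward := by
      rintro a b ⟨x, hx⟩ hab
      exact ⟨x, hab hx⟩
    sep_mp := by
      rintro a b ⟨r, hr⟩ ⟨x, hx⟩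
      exact ⟨C.op r x, hr x hx⟩
    sep_K := by
      refine ⟨C.k, ?_⟩
      simp only [Set.iInf_eq_iInter, Set.mem_iInter, Set.mem_setOf_eq]
      intro a b x hx c hc
      rw [C.k_spec]
      exact hx
    sep_S := by
      refine ⟨C.s, ?_⟩
      simp only [Set.iInf_eq_iInter, Set.mem_iInter, Set.mem_setOf_eq]
      intro a b c x hx d hd z hz
      rw [C.s_spec]
      exact hx z hz (C.op d z) (hd z hz)
  }, rfl, rfl⟩
end
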